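/- Suppose a topological group G acts continuously on a space Y, U and C are subsets of Y with C ⊆ U, and there exists a path h : [0,1] → G with h₀ = identity, h₁(U) ⊆ C, and h_t(U) ⊆ U, h_t(C) ⊆ C for all t. Then the restriction map p : ℰ^G(U,Y) → ℰ^G(C,Y), p(f) = f|_C, between the orbit spaces of embeddings (restrictions to U resp. C of elements of G, with the compact-open topology) is a homotopy equivalence, with homotopy inverse p₁(f) = f ∘ (h₁|_U). -/

import Mathlib

open Set

lemma comp_curry_continuous_aux {Z X Y : Type*} [TopologicalSpace Z] [TopologicalSpace X]
    [TopologicalSpace Y] [CompactSpace Z] [T2Space X] (S : C(Z × X, X)) :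
    Continuous fun p : Z × C(X, Y) => p.2.comp (S.curry p.1) := by
  rw [ContinuousMap.continuous_compactOpen]
  intro K hK V hV
  set L : Set X := S '' (univ ×ˢ K) with hLdef
  have hLc : IsCompact L := (isCompact_univ.prod hK).image S.continuous
  haveI : CompactSpace L := isCompact_iff_compactSpace.mp hLc
  haveI : CompactSpace K := isCompact_iff_compactSpace.mp hK
  have hmem : ∀ (z : Z) (x : K), S (z, (x : X)) ∈ L :=
    fun z x => ⟨(z, (x : X)), ⟨mem_univ _, x.2⟩, rfl⟩
  let ρ : C(Z × ↥K, ↥L) :=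
    ⟨fun p => ⟨S (p.1, (p.2 : X)), hmem p.1 p.2⟩,
      (S.continuous.comp (continuous_fst.prodMk
        (continuous_subtype_val.comp continuous_snd))).subtype_mk _⟩
  have hΘ : Continuous fun p : Z × C(X, Y) => (p.2.restrict L).comp (ρ.curry p.1) :=
    Continuous.compCM
      ((ContinuousMap.continuous_restrict L).comp continuous_snd)
      (ρ.curry.continuous.comp continuous_fst)
  have hset : {p : Z × C(X, Y) | MapsTo (p.2.comp (S.curry p.1)) K V}
      = (fun p : Z × C(X, Y) => (p.2.restrict L).comp (ρ.curry p.1)) ⁻¹'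
        {g : C(↥K, Y) | MapsTo g univ V} := by
    ext p
    constructor
    · intro hp x _
      exact hp x.2
    · intro hp x hx
      exact hp (x := ⟨x, hx⟩) (mem_univ _)
  rw [hset]
  exact (ContinuousMap.isOpen_setOf_mapsTo isCompact_univ hV).preimage hΘ

open unitInterval

theorem restriction_map_homotopy_equivalence
    {G Y : Type*} [Group G] [TopologicalSpace G] [IsTopologicalGroup G]
    [TopologicalSpace Y] [LocallyCompactSpace Y] [T2Space Y]
    [MulAction G Y] [ContinuousSMul G Y]
    (U C : Set Y) (hCU : C ⊆ U)
    (h : C(I, G)) (h0 : h 0 = 1)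
    (h1U : ∀ x ∈ U, (h 1) • x ∈ C)
    (htU : ∀ (t : I), ∀ x ∈ U, (h t) • x ∈ U)
    (htC : ∀ (t : I), ∀ x ∈ C, (h t) • x ∈ C) :
    ∃ e : ContinuousMap.HomotopyEquiv
        {f : C(↥U, Y) // ∃ g : G, ∀ x : ↥U, f x = g • (x : Y)}
        {f : C(↥C, Y) // ∃ g : G, ∀ x : ↥C, f x = g • (x : Y)},
      (∀ f (x : ↥C), ((e.toFun f : {f : C(↥C, Y) // ∃ g : G, ∀ x : ↥C, f x = g • (x : Y)}) :
          C(↥C, Y)) x = (f : C(↥U, Y)) ⟨(x : Y), hCU x.2⟩) ∧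
      (∀ f (x : ↥U), ((e.invFun f : {f : C(↥U, Y) // ∃ g : G, ∀ x : ↥U, f x = g • (x : Y)}) :
          C(↥U, Y)) x = (f : C(↥C, Y)) ⟨(h 1) • (x : Y), h1U x.1 x.2⟩) := by
  set EU := {f : C(↥U, Y) // ∃ g : G, ∀ x : ↥U, f x = g • (x : Y)} with hEU
  set EC := {f : C(↥C, Y) // ∃ g : G, ∀ x : ↥C, f x = g • (x : Y)} with hEC
  -- inclusion C → U
  let ι : C(↥C, ↥U) := ⟨fun x => ⟨(x : Y), hCU x.2⟩, continuous_subtype_val.subtype_mk _⟩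
  -- h 1 : U → C
  let κ : C(↥U, ↥C) := ⟨fun x => ⟨h 1 • (x : Y), h1U _ x.2⟩,
    ((continuous_const.smul continuous_subtype_val)).subtype_mk _⟩
  -- the two "flow" maps
  let SU : C(I × ↥U, ↥U) := ⟨fun p => ⟨h p.1 • (p.2 : Y), htU p.1 _ p.2.2⟩,
    (((h.continuous.comp continuous_fst).smul
      (continuous_subtype_val.comp continuous_snd))).subtype_mk _⟩
  let SC : C(I × ↥C, ↥C) := ⟨fun p => ⟨h p.1 • (p.2 : Y), htC p.1 _ p.2.2⟩,
    (((h.continuous.comp continuous_fst).smul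
      (continuous_subtype_val.comp continuous_snd))).subtype_mk _⟩
  -- the restriction map p and its homotopy inverse q
  have memP : ∀ f : EU, ∃ g : G, ∀ x : ↥C, ((f : C(↥U, Y)).comp ι) x = g • (x : Y) := by
    intro f
    obtain ⟨g, hg⟩ := f.2
    exact ⟨g, fun x => hg _⟩
  have memQ : ∀ f : EC, ∃ g : G, ∀ x : ↥U, ((f : C(↥C, Y)).comp κ) x = g • (x : Y) := by
    intro f
    obtain ⟨g, hg⟩ := f.2
    exact ⟨g * h 1, fun x => by
      show (f : C(↥C, Y)) (κ x) = _
      rw [hg, mul_smul]; rfl⟩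
  let P : C(EU, EC) := ⟨fun f => ⟨(f : C(↥U, Y)).comp ι, memP f⟩,
    Continuous.subtype_mk
      (((ContinuousMap.continuous_precomp ι).comp continuous_subtype_val)) _⟩
  let Q : C(EC, EU) := ⟨fun f => ⟨(f : C(↥C, Y)).comp κ, memQ f⟩,
    Continuous.subtype_mk
      (((ContinuousMap.continuous_precomp κ).comp continuous_subtype_val)) _⟩
  -- homotopy from id to Q ∘ P on EU
  have memU : ∀ (t : I) (f : EU), ∃ g : G,
      ∀ x : ↥U, ((f : C(↥U, Y)).comp (SU.curry t)) x = g • (x : Y) := by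
    intro t f
    obtain ⟨g, hg⟩ := f.2
    exact ⟨g * h t, fun x => by
      show (f : C(↥U, Y)) (SU (t, x)) = _
      rw [hg, mul_smul]; rfl⟩
  have memC : ∀ (t : I) (f : EC), ∃ g : G,
      ∀ x : ↥C, ((f : C(↥C, Y)).comp (SC.curry t)) x = g • (x : Y) := by
    intro t f
    obtain ⟨g, hg⟩ := f.2
    exact ⟨g * h t, fun x => by
      show (f : C(↥C, Y)) (SC (t, x)) = _
      rw [hg, mul_smul]; rfl⟩
  let GU : ContinuousMap.Homotopy (ContinuousMap.id EU) (Q.comp P) :=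
    { toFun := fun p => ⟨((p.2 : C(↥U, Y)).comp (SU.curry p.1)), memU p.1 p.2⟩
      continuous_toFun := ((comp_curry_continuous_aux SU).comp
        (continuous_fst.prodMk (continuous_subtype_val.comp continuous_snd))).subtype_mk _
      map_zero_left := fun f => by
        apply Subtype.ext
        apply ContinuousMap.ext
        intro x
        show (f : C(↥U, Y)) (SU (0, x)) = (f : C(↥U, Y)) x
        exact congrArg _ (Subtype.ext (by show h 0 • (x : Y) = (x : Y); rw [h0, one_smul]))
      map_one_left := fun f => by
        apply Subtype.ext
        apply ContinuousMap.ext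
        intro x
        show (f : C(↥U, Y)) (SU (1, x)) = (f : C(↥U, Y)) (ι (κ x))
        exact congrArg _ (Subtype.ext rfl) }
  let GC : ContinuousMap.Homotopy (ContinuousMap.id EC) (P.comp Q) :=
    { toFun := fun p => ⟨((p.2 : C(↥C, Y)).comp (SC.curry p.1)), memC p.1 p.2⟩
      continuous_toFun := ((comp_curry_continuous_aux SC).comp
        (continuous_fst.prodMk (continuous_subtype_val.comp continuous_snd))).subtype_mk _
      map_zero_left := fun f => by
        apply Subtype.ext
        apply ContinuousMap.ext
        intro x
        show (f : C(↥C, Y)) (SC (0, x)) = (f : C(↥C, Y)) x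
        exact congrArg _ (Subtype.ext (by show h 0 • (x : Y) = (x : Y); rw [h0, one_smul]))
      map_one_left := fun f => by
        apply Subtype.ext
        apply ContinuousMap.ext
        intro x
        show (f : C(↥C, Y)) (SC (1, x)) = (f : C(↥C, Y)) (κ (ι x))
        exact congrArg _ (Subtype.ext rfl) }
  refine ⟨⟨P, Q, ⟨GU.symm⟩, ⟨GC.symm⟩⟩, fun f x => rfl, fun f x => rfl⟩
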